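/- Let F be a field of characteristic not 2 and q a nondegenerate quadratic form over F. Then q is a group form over F if and only if q (extended by base change) is a group form over the Laurent series field F((x)). -/

import Mathlib

open QuadraticMap

/-- `DSet F q` is the set of nonzero values of `F` represented by the quadratic form `q`. -/
def DSet (F : Type*) [Field F] {V : Type*} [AddCommGroup V] [Module F V]
    (q : QuadraticForm F V) : Set F :=
  {a : F | a ≠ 0 ∧ ∃ v : V, q v = a}

/-- `HSet F q` is the set of `a ∈ F×` such that `q ⊥ (-a)q` (i.e. `⟨1,-a⟩ ⊗ q`) is isotropic. -/
def HSet (F : Type*) [Field F] {V : Type*} [AddCommGroup V] [Module F V]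
    (q : QuadraticForm F V) : Set F :=
  {a : F | a ≠ 0 ∧ ¬ (QuadraticMap.prod q ((-a) • q)).Anisotropic}

/-- `GSet F q` is the group of similarity factors of `q`: those `a ∈ F×` with `aq ≅ q`. -/
def GSet (F : Type*) [Field F] {V : Type*} [AddCommGroup V] [Module F V]
    (q : QuadraticForm F V) : Set F :=
  {a : F | a ≠ 0 ∧ QuadraticMap.Equivalent (a • q) q}

/-- `q` is a group form if its set of nonzero represented values is a subgroup of `F×`. -/
def IsGroupForm (F : Type*) [Field F] {V : Type*} [AddCommGroup V] [Module F V]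
    (q : QuadraticForm F V) : Prop :=
  (1 : F) ∈ DSet F q ∧ (∀ a ∈ DSet F q, ∀ b ∈ DSet F q, a * b ∈ DSet F q) ∧
    ∀ a ∈ DSet F q, a⁻¹ ∈ DSet F q

/-- `q` is round if its value set coincides with its group of similarity factors. -/
def IsRound (F : Type*) [Field F] {V : Type*} [AddCommGroup V] [Module F V]
    (q : QuadraticForm F V) : Prop :=
  DSet F q = GSet F q

/-- Nondegeneracy of a quadratic form, via its polar form. -/
def NondegQF (F : Type*) [Field F] {V : Type*} [AddCommGroup V] [Module F V]
    (q : QuadraticForm F V) : Prop :=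
  ∀ v : V, (∀ w : V, polar q v w = 0) → v = 0

/-- Base change (scalar extension) of a quadratic form on `Fin n → F` along `F → K`,
given by extending the Gram matrix. -/
noncomputable def baseChangeFin {F : Type*} [Field F] [Invertible (2 : F)]
    (K : Type*) [Field K] [Algebra F K] {n : ℕ} (q : QuadraticForm F (Fin n → F)) :
    QuadraticForm K (Fin n → K) :=
  ((QuadraticForm.toMatrix' q).map (algebraMap F K)).toQuadraticMap'


open QuadraticMap HahnSeries

lemma universal_of_isotropic {L : Type*} [Field L] {V : Type*} [AddCommGroup V] [Module L V]
    (Q : QuadraticForm L V) (v w : V) (h0 : Q v = 0) (hp : polar Q v w ≠ 0)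
    (a : L) : ∃ u : V, Q u = a := by
  refine ⟨((a - Q w) / polar Q v w) • v + w, ?_⟩
  set c := (a - Q w) / polar Q v w with hc
  have hpol : Q (c • v + w) = Q (c • v) + Q w + polar Q (c • v) w := by
    rw [polar]; ring
  rw [hpol, QuadraticMap.map_smul, h0, smul_zero, QuadraticMap.polar_smul_left, smul_eq_mul,
    hc, div_mul_cancel₀ _ hp]
  ring

lemma sq_descend {F : Type*} [Field F] (a : F) (ha : a ≠ 0) (c : LaurentSeries F)
    (h : c ^ 2 = algebraMap F (LaurentSeries F) a) : ∃ b : F, b ^ 2 = a := by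
  have hc : c ≠ 0 := by
    intro h0
    rw [h0] at h
    apply ha
    have : algebraMap F (LaurentSeries F) a = 0 := by rw [← h]; ring
    exact (map_eq_zero _).mp this
  have hmul := HahnSeries.coeff_mul_order_add_order c c
  have hlc : c.leadingCoeff ≠ 0 := HahnSeries.leadingCoeff_ne_zero.mpr hc
  have halg : algebraMap F (LaurentSeries F) a = HahnSeries.single (0 : ℤ) a := by
    rw [HahnSeries.algebraMap_apply', PowerSeries.algebraMap_apply, Algebra.algebraMap_self_apply,
      HahnSeries.ofPowerSeries_C, HahnSeries.C_apply]
  rw [← _root_.sq, h, halg] at hmul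
  have horder : c.order + c.order = 0 := by
    by_contra hne
    rw [HahnSeries.coeff_single_of_ne hne] at hmul
    exact mul_ne_zero hlc hlc hmul.symm
  rw [horder, HahnSeries.coeff_single_same] at hmul
  exact ⟨c.leadingCoeff, by rw [_root_.sq, hmul]⟩

section Aux
variable {F : Type*} [Field F] [Invertible (2 : F)] {n : ℕ} (q : QuadraticForm F (Fin n → F))

lemma baseChangeFin_apply (K : Type*) [Field K] [Algebra F K] (w : Fin n → K) :
    baseChangeFin K q w
      = ∑ i, ∑ j, w i * (w j * algebraMap F K (QuadraticForm.toMatrix' q i j)) := by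
  rw [baseChangeFin]
  unfold Matrix.toQuadraticMap'
  rw [Matrix.toQuadraticForm', LinearMap.BilinMap.toQuadraticMap_apply,
    Matrix.toLinearMap₂'_apply]
  simp [Matrix.map_apply, smul_eq_mul]

lemma qf_apply_eq (y : Fin n → F) :
    q y = ∑ i, ∑ j, y i * (y j * QuadraticForm.toMatrix' q i j) := by
  conv_lhs => rw [show q = (QuadraticForm.toMatrix' q).toQuadraticMap' by
    unfold Matrix.toQuadraticMap'
    rw [Matrix.toQuadraticForm', QuadraticForm.toMatrix', Matrix.toLinearMap₂'_toMatrix',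
      QuadraticMap.toQuadraticMap_associated]]
  unfold Matrix.toQuadraticMap'
  rw [Matrix.toQuadraticForm', LinearMap.BilinMap.toQuadraticMap_apply,
    Matrix.toLinearMap₂'_apply]
  simp [smul_eq_mul]


lemma baseChangeFin_algebraMap (K : Type*) [Field K] [Algebra F K] (v : Fin n → F) :
    baseChangeFin K q (fun i => algebraMap F K (v i)) = algebraMap F K (q v) := by
  rw [baseChangeFin_apply, qf_apply_eq q v]
  simp only [map_sum, map_mul]

lemma laurent_algebraMap (a : F) :
    algebraMap F (LaurentSeries F) a = HahnSeries.ofPowerSeries ℤ F (PowerSeries.C a) := by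
  rw [HahnSeries.algebraMap_apply', PowerSeries.algebraMap_apply, Algebra.algebraMap_self_apply]

noncomputable def sqrtCoeff (F : Type*) [Field F] [Invertible (2:F)]
    (u : PowerSeries F) : ℕ → F
  | 0 => 1
  | (k+1) => ⅟(2:F) * ((PowerSeries.coeff (k+1)) u -
      ∑ i ∈ (Finset.range k).attach, sqrtCoeff F u (i.1+1) * sqrtCoeff F u (k - i.1))
termination_by k => k
decreasing_by
  · exact Nat.succ_lt_succ (Finset.mem_range.mp i.2)
  · exact Nat.lt_succ_of_le (Nat.sub_le _ _)

lemma sqrtCoeff_succ (u : PowerSeries F) (k : ℕ) :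
    sqrtCoeff F u (k+1) = ⅟(2:F) * ((PowerSeries.coeff (k+1)) u -
      ∑ i ∈ Finset.range k, sqrtCoeff F u (i+1) * sqrtCoeff F u (k - i)) := by
  rw [sqrtCoeff, Finset.sum_attach (Finset.range k)
    (fun i => sqrtCoeff F u (i+1) * sqrtCoeff F u (k - i))]

lemma exists_sq_of_constantCoeff_one (u : PowerSeries F)
    (hu : PowerSeries.constantCoeff u = 1) :
    ∃ s : PowerSeries F, s ^ 2 = u := by
  refine ⟨PowerSeries.mk (sqrtCoeff F u), ?_⟩
  rw [_root_.sq]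
  ext k
  rw [PowerSeries.coeff_mul]
  cases k with
  | zero =>
    simp [Finset.Nat.antidiagonal_zero, sqrtCoeff, hu]
  | succ k =>
    rw [Finset.Nat.sum_antidiagonal_eq_sum_range_succ_mk]
    simp only [PowerSeries.coeff_mk]
    rw [Finset.sum_range_succ, Finset.sum_range_succ']
    have hmid : ∀ i, sqrtCoeff F u (i+1) * sqrtCoeff F u (k + 1 - (i+1))
        = sqrtCoeff F u (i+1) * sqrtCoeff F u (k - i) := by
      intro i; rw [Nat.succ_sub_succ]
    simp only [hmid]
    have h0 : sqrtCoeff F u 0 = 1 := by rw [sqrtCoeff]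
    rw [Nat.sub_zero, Nat.sub_self, h0, mul_one, one_mul, sqrtCoeff_succ]
    have h2 : (⅟(2:F)) + ⅟(2:F) = 1 := by
      rw [← two_mul, mul_invOf_self]
    set S := ∑ i ∈ Finset.range k, sqrtCoeff F u (i+1) * sqrtCoeff F u (k - i) with hS
    set Cu := (PowerSeries.coeff (k+1)) u with hCu
    linear_combination (Cu - S) * h2

lemma springer_key (haniso : q.Anisotropic) (α : LaurentSeries F)
    (v : Fin n → LaurentSeries F)
    (hv : baseChangeFin (LaurentSeries F) q v = α) (hα : α ≠ 0) :
    ∃ c : LaurentSeries F, c ≠ 0 ∧ ∃ a : F, a ≠ 0 ∧ (∃ y, q y = a) ∧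
      α = c ^ 2 * algebraMap F (LaurentSeries F) a := by
  classical
  have hvne : ∃ i, v i ≠ 0 := by
    by_contra h
    push_neg at h
    apply hα
    rw [← hv, show v = 0 from funext h]
    exact QuadraticMap.map_zero _
  obtain ⟨iw, hiw⟩ := hvne
  set T : Finset (Fin n) := Finset.univ.filter (fun i => v i ≠ 0) with hTdef
  have hT : T.Nonempty := ⟨iw, Finset.mem_filter.mpr ⟨Finset.mem_univ _, hiw⟩⟩
  set m := T.inf' hT (fun i => (v i).order) with hm
  obtain ⟨i₀, hi₀T, hi₀⟩ := Finset.exists_mem_eq_inf' hT (fun i => (v i).order)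
  have hvi₀ : v i₀ ≠ 0 := (Finset.mem_filter.mp hi₀T).2
  have hle : ∀ i, v i ≠ 0 → m ≤ (v i).order := by
    intro i h
    exact Finset.inf'_le (fun i => (v i).order) (Finset.mem_filter.mpr ⟨Finset.mem_univ i, h⟩)
  set p : Fin n → PowerSeries F := fun i =>
    if h : v i = 0 then 0
    else PowerSeries.X ^ ((v i).order - m).toNat * (v i).powerSeriesPart with hpdef
  have hvp : ∀ i, v i = HahnSeries.single m 1 * HahnSeries.ofPowerSeries ℤ F (p i) := by
    intro i
    by_cases h : v i = 0
    · simp [hpdef, h]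
    · have hcast : ((((v i).order - m).toNat : ℤ)) = (v i).order - m :=
        Int.toNat_of_nonneg (sub_nonneg.2 (hle i h))
      simp only [hpdef, dif_neg h]
      rw [map_mul, HahnSeries.ofPowerSeries_X_pow, LaurentSeries.ofPowerSeries_powerSeriesPart,
        ← mul_assoc, ← mul_assoc, HahnSeries.single_mul_single, one_mul,
        HahnSeries.single_mul_single, one_mul, hcast,
        show m + ((v i).order - m) + -(v i).order = 0 by ring]
      rw [← HahnSeries.C_apply, HahnSeries.C_one, one_mul]
  have hp0 : PowerSeries.constantCoeff (p i₀) ≠ 0 := by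
    simp only [hpdef, dif_neg hvi₀]
    rw [← hi₀, sub_self, Int.toNat_zero, pow_zero, one_mul]
    have : PowerSeries.constantCoeff (v i₀).powerSeriesPart
        = (v i₀).coeff ((v i₀).order) := by
      rw [← PowerSeries.coeff_zero_eq_constantCoeff_apply,
        LaurentSeries.powerSeriesPart_coeff]
      norm_num
    rw [this]
    exact HahnSeries.coeff_order_eq_zero.not.mpr hvi₀
  set w : Fin n → LaurentSeries F := fun i => HahnSeries.ofPowerSeries ℤ F (p i) with hwdef
  have hvw : v = (HahnSeries.single m 1 : LaurentSeries F) • w := by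
    funext i
    rw [Pi.smul_apply, smul_eq_mul, hwdef, hvp i]
  set M := QuadraticForm.toMatrix' q with hM
  set P : PowerSeries F := ∑ i, ∑ j, p i * (p j * PowerSeries.C (M i j)) with hP
  have hqw : baseChangeFin (LaurentSeries F) q w = HahnSeries.ofPowerSeries ℤ F P := by
    rw [baseChangeFin_apply, hP]
    simp only [map_sum, map_mul, laurent_algebraMap, hwdef, hM]
  have hα2 : α = (HahnSeries.single m 1 : LaurentSeries F)^2 * HahnSeries.ofPowerSeries ℤ F P := by
    rw [← hv, hvw, QuadraticMap.map_smul, hqw, smul_eq_mul, _root_.sq]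
  set abar : Fin n → F := fun i => PowerSeries.constantCoeff (p i) with habar
  have hPc : PowerSeries.constantCoeff P = q abar := by
    rw [hP, qf_apply_eq q abar]
    simp only [map_sum, map_mul, PowerSeries.constantCoeff_C, habar, hM]
  set a := q abar with ha'
  have ha : a ≠ 0 := by
    intro h
    exact hp0 (congrFun (haniso abar h) i₀)
  set u := PowerSeries.C a⁻¹ * P with hu
  have hu1 : PowerSeries.constantCoeff u = 1 := by
    rw [hu, map_mul, PowerSeries.constantCoeff_C, hPc, inv_mul_cancel₀ ha]
  obtain ⟨s, hs⟩ := exists_sq_of_constantCoeff_one u hu1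
  have hPu : P = PowerSeries.C a * u := by
    rw [hu, ← mul_assoc, ← map_mul, mul_inv_cancel₀ ha, map_one, one_mul]
  refine ⟨(HahnSeries.single m 1 : LaurentSeries F) * HahnSeries.ofPowerSeries ℤ F s, ?_, a, ha, ⟨abar, rfl⟩, ?_⟩
  · refine mul_ne_zero (HahnSeries.single_ne_zero one_ne_zero) ?_
    intro h
    have hs0 : s = 0 := HahnSeries.ofPowerSeries_injective (by rw [h, map_zero])
    apply one_ne_zero (α := F)
    rw [← hu1, ← hs, hs0]
    simp
  · rw [hα2, hPu, ← hs, map_mul, map_pow, ← laurent_algebraMap]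
    ring
end Aux


section MainAux
open QuadraticMap HahnSeries

variable {F : Type*} [Field F] [Invertible (2 : F)] {n : ℕ} (q : QuadraticForm F (Fin n → F))

lemma mem_DSet_iff {a : F} {V : Type*} [AddCommGroup V] [Module F V]
    (Q : QuadraticForm F V) : a ∈ DSet F Q ↔ a ≠ 0 ∧ ∃ v : V, Q v = a := Iff.rfl

lemma rep_base (a : F) (ha : a ≠ 0) (y : Fin n → F) (hy : q y = a)
    (c : LaurentSeries F) (hc : c ≠ 0) :
    c ^ 2 * algebraMap F (LaurentSeries F) a
      ∈ DSet (LaurentSeries F) (baseChangeFin (LaurentSeries F) q) := by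
  refine ⟨mul_ne_zero (pow_ne_zero 2 hc)
    (fun h => ha ((algebraMap F (LaurentSeries F)).injective (h.trans (map_zero _).symm))),
    c • (fun i => algebraMap F (LaurentSeries F) (y i)), ?_⟩
  rw [QuadraticMap.map_smul, baseChangeFin_algebraMap, hy, smul_eq_mul, _root_.sq]

lemma mem_lift {a : F} (ha : a ∈ DSet F q) :
    algebraMap F (LaurentSeries F) a
      ∈ DSet (LaurentSeries F) (baseChangeFin (LaurentSeries F) q) := by
  obtain ⟨hne, y, hy⟩ := ha
  simpa using rep_base q a hne y hy 1 one_ne_zero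

lemma descend (hiso : q.Anisotropic) (a : F) (ha : a ≠ 0)
    (hmem : algebraMap F (LaurentSeries F) a
      ∈ DSet (LaurentSeries F) (baseChangeFin (LaurentSeries F) q)) :
    a ∈ DSet F q := by
  obtain ⟨hne, v, hv⟩ := hmem
  obtain ⟨c, hc, e, he, ⟨y, hy⟩, heq⟩ := springer_key q hiso _ v hv hne
  have healg : algebraMap F (LaurentSeries F) e ≠ 0 :=
    fun h => he ((algebraMap F (LaurentSeries F)).injective (h.trans (map_zero _).symm))
  have hc2 : c ^ 2 = algebraMap F (LaurentSeries F) (a / e) := by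
    rw [map_div₀, eq_div_iff healg]
    exact heq.symm
  obtain ⟨b, hb⟩ := sq_descend (a / e) (div_ne_zero ha he) c hc2
  have hbne : b ≠ 0 := by
    intro h
    rw [h] at hb
    exact div_ne_zero ha he (by simpa using hb.symm)
  refine ⟨ha, b • y, ?_⟩
  rw [QuadraticMap.map_smul, hy, smul_eq_mul, ← _root_.sq, hb, div_mul_cancel₀ _ he]

end MainAux

theorem group_form_iff_group_form_laurentSeries
    (F : Type*) [Field F] [Invertible (2 : F)]
    {n : ℕ} (hn : 0 < n) (q : QuadraticForm F (Fin n → F)) (hq : NondegQF F q) :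
    IsGroupForm F q ↔ IsGroupForm (LaurentSeries F) (baseChangeFin (LaurentSeries F) q) := by
  classical
  set K := LaurentSeries F with hK
  set Q := baseChangeFin K q with hQ
  by_cases hiso : q.Anisotropic
  · constructor
    · rintro ⟨h1, hmul, hinv⟩
      refine ⟨?_, ?_, ?_⟩
      · obtain ⟨-, y, hy⟩ := h1
        simpa using rep_base q 1 one_ne_zero y hy 1 one_ne_zero
      · rintro α ⟨hα, vα, hvα⟩ β ⟨hβ, vβ, hvβ⟩
        obtain ⟨c, hc, a, ha, ⟨ya, hya⟩, heqa⟩ := springer_key q hiso α vα hvα hα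
        obtain ⟨d, hd, b, hb, ⟨yb, hyb⟩, heqb⟩ := springer_key q hiso β vβ hvβ hβ
        obtain ⟨habne, yab, hyab⟩ := hmul a ⟨ha, ya, hya⟩ b ⟨hb, yb, hyb⟩
        have : α * β = (c * d) ^ 2 * algebraMap F K (a * b) := by
          rw [heqa, heqb, map_mul]; ring
        rw [this]
        exact rep_base q (a*b) habne yab hyab (c*d) (mul_ne_zero hc hd)
      · rintro α ⟨hα, vα, hvα⟩
        obtain ⟨c, hc, a, ha, ⟨ya, hya⟩, heqa⟩ := springer_key q hiso α vα hvα hα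
        obtain ⟨hane, yai, hyai⟩ := hinv a ⟨ha, ya, hya⟩
        have : α⁻¹ = (c⁻¹) ^ 2 * algebraMap F K a⁻¹ := by
          rw [heqa, map_inv₀]
          rw [mul_inv, inv_pow]
        rw [this]
        exact rep_base q a⁻¹ hane yai hyai c⁻¹ (inv_ne_zero hc)
    · rintro ⟨h1, hmul, hinv⟩
      refine ⟨?_, ?_, ?_⟩
      · refine descend q hiso 1 one_ne_zero ?_
        rw [map_one]; exact h1
      · intro a ha b hb
        refine descend q hiso (a * b) (mul_ne_zero ha.1 hb.1) ?_
        rw [map_mul]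
        exact hmul _ (mem_lift q ha) _ (mem_lift q hb)
      · intro a ha
        refine descend q hiso a⁻¹ (inv_ne_zero ha.1) ?_
        rw [map_inv₀]
        exact hinv _ (mem_lift q ha)
  · rw [QuadraticMap.Anisotropic] at hiso
    push_neg at hiso
    obtain ⟨v, hqv, hv0⟩ := hiso
    have hex : ∃ w, QuadraticMap.polar q v w ≠ 0 := by
      by_contra h
      push_neg at h
      exact hv0 (hq v h)
    obtain ⟨w, hw⟩ := hex
    have hunivF : ∀ a : F, ∃ u, q u = a := universal_of_isotropic q v w hqv hw
    have hmemF : ∀ a : F, a ≠ 0 → a ∈ DSet F q := fun a ha => ⟨ha, hunivF a⟩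
    set v' : Fin n → K := fun i => algebraMap F K (v i) with hv'
    set w' : Fin n → K := fun i => algebraMap F K (w i) with hw'
    have hQv' : Q v' = 0 := by
      rw [hv', hQ, baseChangeFin_algebraMap, hqv, map_zero]
    have hpol : QuadraticMap.polar Q v' w' = algebraMap F K (QuadraticMap.polar q v w) := by
      have hadd : v' + w' = fun i => algebraMap F K ((v + w) i) := by
        funext i
        simp [hv', hw', map_add]
      rw [QuadraticMap.polar, QuadraticMap.polar, hadd, hQ, baseChangeFin_algebraMap,
        baseChangeFin_algebraMap, baseChangeFin_algebraMap, _root_.map_sub, _root_.map_sub]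
    have hw2 : QuadraticMap.polar Q v' w' ≠ 0 := by
      rw [hpol]
      exact fun h => hw ((algebraMap F K).injective (h.trans (map_zero _).symm))
    have hunivK : ∀ a : K, ∃ u, Q u = a := universal_of_isotropic Q v' w' hQv' hw2
    have hmemK : ∀ a : K, a ≠ 0 → a ∈ DSet K Q := fun a ha => ⟨ha, hunivK a⟩
    constructor
    · intro _
      exact ⟨hmemK 1 one_ne_zero,
        fun a ha b hb => hmemK _ (mul_ne_zero ha.1 hb.1),
        fun a ha => hmemK _ (inv_ne_zero ha.1)⟩
    · intro _
      exact ⟨hmemF 1 one_ne_zero,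
        fun a ha b hb => hmemF _ (mul_ne_zero ha.1 hb.1),
        fun a ha => hmemF _ (inv_ne_zero ha.1)⟩
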